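/- Let $N \ge 2$ and $M \ge N + 2$. There exists a subspace $L \subset \wedge^N \mathbb{C}^M$ of codimension 3 that is not spanned by the decomposable vectors it contains. -/

import Mathlib

open scoped InnerProductSpace

noncomputable section

/-- The `N`-fold tensor power of `ℂ^M`, realized as the Euclidean space with
orthonormal basis indexed by multi-indices `Fin N → Fin M`. -/
abbrev TensorPow (N M : ℕ) : Type := EuclideanSpace ℂ (Fin N → Fin M)

/-- The wedge (Slater determinant) of a family of `N` vectors in `ℂ^M`:
`|v 0⟩ ∧ ⋯ ∧ |v (N-1)⟩ = ∑ σ, sgn σ • |v σ(0), …, v σ(N-1)⟩`. -/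
def wedge {N M : ℕ} (v : Fin N → EuclideanSpace ℂ (Fin M)) : TensorPow N M :=
  WithLp.toLp 2 (fun x => ∑ σ : Equiv.Perm (Fin N), ((Equiv.Perm.sign σ : ℤ) : ℂ) * ∏ k, v (σ k) (x k))

/-- The exterior power `⋀^N ℂ^M`, i.e. the subspace of antisymmetric tensors
in `(ℂ^M)^{⊗N}`. -/
def exteriorPow (N M : ℕ) : Submodule ℂ (TensorPow N M) where
  carrier := {ψ | ∀ σ : Equiv.Perm (Fin N), ∀ x : Fin N → Fin M,
    ψ (x ∘ σ) = ((Equiv.Perm.sign σ : ℤ) : ℂ) * ψ x}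
  add_mem' := by
    intro a b ha hb σ x
    have h1 := ha σ x
    have h2 := hb σ x
    show a (x ∘ σ) + b (x ∘ σ) = ((Equiv.Perm.sign σ : ℤ) : ℂ) * (a x + b x)
    rw [h1, h2]; ring
  zero_mem' := by
    intro σ x
    show (0 : ℂ) = ((Equiv.Perm.sign σ : ℤ) : ℂ) * (0 : ℂ)
    ring
  smul_mem' := by
    intro c a ha σ x
    have h1 := ha σ x
    show c * a (x ∘ σ) = ((Equiv.Perm.sign σ : ℤ) : ℂ) * (c * a x)
    rw [h1]; ring

/-- A decomposable (Slater determinant) vector in `⋀^N ℂ^M`. -/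
def IsSlater {N M : ℕ} (ψ : TensorPow N M) : Prop :=
  ∃ v : Fin N → EuclideanSpace ℂ (Fin M), ψ = wedge v

/-! ### Auxiliary material: a three-term Plücker relation for bordered determinants. -/

namespace PluckerAux

variable {n : ℕ}

/-- determinant of the matrix with rows `w 0, …, w (n-1), x, y`. -/
def D (w : Fin n → (Fin (n+2) → ℂ)) (x y : Fin (n+2) → ℂ) : ℂ :=
  (Matrix.of (Fin.snoc (Fin.snoc w x) y)).det

variable {w : Fin n → (Fin (n+2) → ℂ)}





lemma mat_eq₂ (w : Fin n → (Fin (n+2) → ℂ)) (x y z : Fin (n+2) → ℂ) :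
    Matrix.of (Fin.snoc (Fin.snoc w x) y) =
      (Matrix.of (Fin.snoc (Fin.snoc w x) z)).updateRow (Fin.last (n+1)) y := by
  ext i j
  induction i using Fin.lastCases with
  | last => simp [Matrix.updateRow_self]
  | cast i =>
    rw [Matrix.updateRow_ne (Fin.castSucc_lt_last i).ne]
    simp

lemma mat_eq₁ (w : Fin n → (Fin (n+2) → ℂ)) (x y z : Fin (n+2) → ℂ) :
    Matrix.of (Fin.snoc (Fin.snoc w x) y) =
      (Matrix.of (Fin.snoc (Fin.snoc w z) y)).updateRow ((Fin.last n).castSucc) x := by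
  ext i j
  induction i using Fin.lastCases with
  | last =>
    rw [Matrix.updateRow_ne (Fin.castSucc_lt_last (Fin.last n)).ne']
    simp
  | cast i =>
    induction i using Fin.lastCases with
    | last => simp [Matrix.updateRow_self]
    | cast i =>
      rw [Matrix.updateRow_ne (by simp [Fin.ext_iff]; omega : i.castSucc.castSucc ≠ (Fin.last n).castSucc)]
      simp

lemma D_add_left (w : Fin n → (Fin (n+2) → ℂ)) (x x' y : Fin (n+2) → ℂ) :
    D w (x + x') y = D w x y + D w x' y := by
  unfold D
  rw [mat_eq₁ w (x+x') y 0, mat_eq₁ w x y 0, mat_eq₁ w x' y 0, Matrix.det_updateRow_add]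

lemma D_smul_left (w : Fin n → (Fin (n+2) → ℂ)) (s : ℂ) (x y : Fin (n+2) → ℂ) :
    D w (s • x) y = s * D w x y := by
  unfold D
  rw [mat_eq₁ w (s • x) y 0, mat_eq₁ w x y 0, Matrix.det_updateRow_smul]

lemma D_add_right (w : Fin n → (Fin (n+2) → ℂ)) (x y y' : Fin (n+2) → ℂ) :
    D w x (y + y') = D w x y + D w x y' := by
  unfold D
  rw [mat_eq₂ w x (y+y') 0, mat_eq₂ w x y 0, mat_eq₂ w x y' 0, Matrix.det_updateRow_add]

lemma D_smul_right (w : Fin n → (Fin (n+2) → ℂ)) (s : ℂ) (x y : Fin (n+2) → ℂ) :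
    D w x (s • y) = s * D w x y := by
  unfold D
  rw [mat_eq₂ w x (s • y) 0, mat_eq₂ w x y 0, Matrix.det_updateRow_smul]

lemma D_self (w : Fin n → (Fin (n+2) → ℂ)) (z : Fin (n+2) → ℂ) : D w z z = 0 :=
  Matrix.det_zero_of_row_eq (i := (Fin.last n).castSucc) (j := Fin.last (n+1))
    (Fin.castSucc_lt_last _).ne (by funext j; simp)

lemma D_row_left (w : Fin n → (Fin (n+2) → ℂ)) (k : Fin n) (y : Fin (n+2) → ℂ) :
    D w (w k) y = 0 :=
  Matrix.det_zero_of_row_eq (i := k.castSucc.castSucc) (j := (Fin.last n).castSucc)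
    (by simp [Fin.ext_iff]; omega) (by funext j; simp)

lemma D_row_right (w : Fin n → (Fin (n+2) → ℂ)) (k : Fin n) (x : Fin (n+2) → ℂ) :
    D w x (w k) = 0 :=
  Matrix.det_zero_of_row_eq (i := k.castSucc.castSucc) (j := Fin.last (n+1))
    (by simp [Fin.ext_iff]; omega) (by funext j; simp)

lemma D_span_left (w : Fin n → (Fin (n+2) → ℂ)) {x : Fin (n+2) → ℂ}
    (hx : x ∈ Submodule.span ℂ (Set.range w)) (y : Fin (n+2) → ℂ) : D w x y = 0 := by
  induction hx using Submodule.span_induction with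
  | mem z hz => obtain ⟨k, rfl⟩ := hz; exact D_row_left w k y
  | zero =>
    have h0 : D w ((0:ℂ) • (0 : Fin (n+2) → ℂ)) y = 0 * D w 0 y := D_smul_left w 0 0 y
    simpa using h0
  | add a b _ _ ha hb => rw [D_add_left, ha, hb, add_zero]
  | smul s a _ ha => rw [D_smul_left, ha, mul_zero]



lemma D_span_right (w : Fin n → (Fin (n+2) → ℂ)) {y : Fin (n+2) → ℂ}
    (hy : y ∈ Submodule.span ℂ (Set.range w)) : ∀ x, D w x y = 0 := by
  induction hy using Submodule.span_induction with
  | mem z hz => obtain ⟨k, rfl⟩ := hz; exact fun x => D_row_right w k x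
  | zero =>
    intro x
    have h0 : D w x ((0:ℂ) • (0 : Fin (n+2) → ℂ)) = 0 * D w x 0 := D_smul_right w 0 x 0
    simpa using h0
  | add a b _ _ ha hb => intro x; rw [D_add_right, ha, hb, add_zero]
  | smul s a _ ha => intro x; rw [D_smul_right, ha x, mul_zero]

lemma D_span_left' (w : Fin n → (Fin (n+2) → ℂ)) {x : Fin (n+2) → ℂ}
    (hx : x ∈ Submodule.span ℂ (Set.range w)) : ∀ y, D w x y = 0 :=
  fun y => D_span_left w hx y

lemma D_antisymm (w : Fin n → (Fin (n+2) → ℂ)) (x y : Fin (n+2) → ℂ) :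
    D w y x = - D w x y := by
  have h := D_self w (x + y)
  rw [D_add_left, D_add_right, D_add_right, D_self, D_self] at h
  linear_combination h

lemma D_degenerate (w : Fin n → (Fin (n+2) → ℂ)) (hw : ¬ LinearIndependent ℂ w)
    (x y : Fin (n+2) → ℂ) : D w x y = 0 := by
  rw [Fintype.not_linearIndependent_iff] at hw
  obtain ⟨g, hg, i, hi⟩ := hw
  by_contra hD
  have hvm : Matrix.vecMul (Fin.snoc (Fin.snoc g 0 : Fin (n+1) → ℂ) 0)
      (Matrix.of (Fin.snoc (Fin.snoc w x) y)) = 0 := by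
    funext j
    have hgj : ∑ k : Fin n, g k * w k j = 0 := by
      have := congrFun hg j
      simpa [Finset.sum_apply] using this
    simp only [Matrix.vecMul, dotProduct]
    rw [Fin.sum_univ_castSucc, Fin.sum_univ_castSucc]
    simp only [Fin.snoc_castSucc, Fin.snoc_last, Matrix.of_apply, Pi.zero_apply]
    simpa using hgj
  have h0 := Matrix.eq_zero_of_vecMul_eq_zero hD hvm
  have h1 := congrFun h0 i.castSucc.castSucc
  simp at h1
  exact hi h1

lemma plucker (w : Fin n → (Fin (n+2) → ℂ)) (a b c d : Fin (n+2) → ℂ) :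
    D w a b * D w c d - D w a c * D w b d + D w a d * D w b c = 0 := by
  by_cases hw : LinearIndependent ℂ w
  · obtain ⟨U, hU⟩ := Submodule.exists_isCompl (Submodule.span ℂ (Set.range w))
    have hWr : Module.finrank ℂ (Submodule.span ℂ (Set.range w)) = n := by
      rw [finrank_span_eq_card hw]; simp
    have hUr : Module.finrank ℂ U = 2 := by
      have h1 := Submodule.finrank_add_eq_of_isCompl hU
      rw [hWr, Module.finrank_fin_fun] at h1
      omega
    obtain ⟨B⟩ : Nonempty (Module.Basis (Fin 2) ℂ U) := ⟨Module.finBasisOfFinrankEq ℂ U hUr⟩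
    have decomp : ∀ x : Fin (n+2) → ℂ, ∃ p ∈ Submodule.span ℂ (Set.range w), ∃ su tu : ℂ,
        x = p + su • (B 0 : Fin (n+2) → ℂ) + tu • (B 1 : Fin (n+2) → ℂ) := by
      intro x
      refine ⟨((Submodule.span ℂ (Set.range w)).projectionOnto U hU x : Fin (n+2) → ℂ),
        Submodule.coe_mem _,
        B.repr (U.projectionOnto _ hU.symm x) 0,
        B.repr (U.projectionOnto _ hU.symm x) 1, ?_⟩
      have h1 := Submodule.projection_add_projection_eq_self hU x
      rw [Submodule.projection_apply, Submodule.projection_apply] at h1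
      have h3 := B.sum_repr (U.projectionOnto _ hU.symm x)
      rw [Fin.sum_univ_two] at h3
      conv_lhs => rw [← h1]
      rw [add_assoc]
      congr 1
      conv_lhs => rw [← h3]
      push_cast
      ring
    have expand : ∀ (p : Fin (n+2) → ℂ), p ∈ Submodule.span ℂ (Set.range w) →
        ∀ (q : Fin (n+2) → ℂ), q ∈ Submodule.span ℂ (Set.range w) → ∀ su tu sv tv : ℂ,
        D w (p + su • (B 0 : Fin (n+2) → ℂ) + tu • (B 1 : Fin (n+2) → ℂ))
            (q + sv • (B 0 : Fin (n+2) → ℂ) + tv • (B 1 : Fin (n+2) → ℂ))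
          = (su * tv - tu * sv) * D w (B 0 : Fin (n+2) → ℂ) (B 1 : Fin (n+2) → ℂ) := by
      intro p hp q hq su tu sv tv
      have hA := D_antisymm w (B 0 : Fin (n+2) → ℂ) (B 1 : Fin (n+2) → ℂ)
      simp only [D_add_left, D_add_right, D_smul_left, D_smul_right,
        D_span_left' w hp, D_span_right w hq, D_self, hA]
      ring
    obtain ⟨pa, hpa, sa, ta, ha⟩ := decomp a
    obtain ⟨pb, hpb, sb, tb, hb⟩ := decomp b
    obtain ⟨pc, hpc, sc, tc, hc⟩ := decomp c
    obtain ⟨pd, hpd, sd, td, hd⟩ := decomp d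
    rw [ha, hb, hc, hd]
    rw [expand pa hpa pb hpb sa ta sb tb, expand pc hpc pd hpd sc tc sd td,
      expand pa hpa pc hpc sa ta sc tc, expand pb hpb pd hpd sb tb sd td,
      expand pa hpa pd hpd sa ta sd td, expand pb hpb pc hpc sb tb sc tc]
    ring
  · simp [D_degenerate w hw]


end PluckerAux

/-! ### Lemmas about `wedge`. -/

section WedgeLemmas

variable {N M : ℕ}

lemma wedge_apply (v : Fin N → EuclideanSpace ℂ (Fin M)) (x : Fin N → Fin M) :
    wedge v x = (Matrix.of (fun l k => v l (x k))).det := by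
  rw [Matrix.det_apply']
  rfl

lemma wedge_perm (v : Fin N → EuclideanSpace ℂ (Fin M)) (σ : Equiv.Perm (Fin N))
    (x : Fin N → Fin M) :
    wedge v (x ∘ σ) = ((Equiv.Perm.sign σ : ℤ) : ℂ) * wedge v x := by
  show (∑ τ : Equiv.Perm (Fin N), ((Equiv.Perm.sign τ : ℤ) : ℂ) * ∏ k, v (τ k) ((x ∘ σ) k))
      = _ * ∑ τ : Equiv.Perm (Fin N), ((Equiv.Perm.sign τ : ℤ) : ℂ) * ∏ k, v (τ k) (x k)
  rw [Finset.mul_sum]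
  rw [← Equiv.sum_comp (Equiv.mulRight σ)
    (fun τ => ((Equiv.Perm.sign τ : ℤ) : ℂ) * ∏ k, v (τ k) ((x ∘ σ) k))]
  apply Finset.sum_congr rfl
  intro ρ _
  have hp : ∏ k, v ((ρ * σ) k) ((x ∘ σ) k) = ∏ k, v (ρ k) (x k) := by
    have := Equiv.prod_comp σ (fun k => v (ρ k) (x k))
    simpa [Equiv.Perm.mul_apply] using this
  simp only [Equiv.coe_mulRight, hp]
  rw [map_mul]
  push_cast [Units.val_mul]
  ring

lemma wedge_mem_exteriorPow (v : Fin N → EuclideanSpace ℂ (Fin M)) :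
    wedge v ∈ exteriorPow N M :=
  fun σ x => wedge_perm v σ x

/-- basis vector of `ℂ^M` -/
def bv (i : Fin M) : EuclideanSpace ℂ (Fin M) := EuclideanSpace.single i 1

lemma wedge_bv_self {s : Fin N → Fin M} (hs : Function.Injective s) :
    wedge (fun k => bv (s k)) s = 1 := by
  show (∑ σ : Equiv.Perm (Fin N), ((Equiv.Perm.sign σ : ℤ) : ℂ) * ∏ k, bv (s (σ k)) (s k)) = 1
  rw [Finset.sum_eq_single 1]
  · simp [bv, EuclideanSpace.single_apply]
  · intro σ _ hσ
    obtain ⟨k, hk⟩ : ∃ k, σ k ≠ k := by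
      by_contra h
      push_neg at h
      exact hσ (Equiv.ext h)
    have : bv (s (σ k)) (s k) = 0 := by
      rw [bv, EuclideanSpace.single_apply, if_neg (fun h => hk (hs h).symm)]
    rw [Finset.prod_eq_zero (Finset.mem_univ k) this, mul_zero]
  · simp

lemma wedge_bv_zero (s x : Fin N → Fin M) (k₀ : Fin N) (h : ∀ j, s j ≠ x k₀) :
    wedge (fun k => bv (s k)) x = 0 := by
  show (∑ σ : Equiv.Perm (Fin N), ((Equiv.Perm.sign σ : ℤ) : ℂ) * ∏ k, bv (s (σ k)) (x k)) = 0
  apply Finset.sum_eq_zero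
  intro σ _
  have : bv (s (σ k₀)) (x k₀) = 0 := by
    rw [bv, EuclideanSpace.single_apply, if_neg (fun hh => h (σ k₀) hh.symm)]
  rw [Finset.prod_eq_zero (Finset.mem_univ k₀) this, mul_zero]

/-- evaluation at a multi-index, as a linear functional -/
def evL (pt : Fin N → Fin M) : TensorPow N M →ₗ[ℂ] ℂ where
  toFun ψ := ψ pt
  map_add' _ _ := rfl
  map_smul' _ _ := rfl

@[simp] lemma evL_apply (pt : Fin N → Fin M) (ψ : TensorPow N M) : evL pt ψ = ψ pt := rfl

end WedgeLemmas

section QLemmas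

variable {n M : ℕ}

/-- the multi-index `(p 0, …, p (n-1), i, j)` -/
def qpt (p : Fin n → Fin M) (i j : Fin M) : Fin (n+2) → Fin M :=
  Fin.snoc (Fin.snoc p i) j

lemma wedge_qpt (v : Fin (n+2) → EuclideanSpace ℂ (Fin M)) (p : Fin n → Fin M)
    (i j : Fin M) :
    wedge v (qpt p i j)
      = PluckerAux.D ((fun (m : Fin M) (l : Fin (n+2)) => v l m) ∘ p)
          (fun l => v l i) (fun l => v l j) := by
  rw [wedge_apply, ← Matrix.det_transpose]
  unfold PluckerAux.D qpt
  congr 1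
  ext k l
  simp only [Matrix.transpose_apply, Matrix.of_apply]
  have h : (Fin.snoc (Fin.snoc ((fun (m : Fin M) (l : Fin (n+2)) => v l m) ∘ p)
        (fun l => v l i)) (fun l => v l j) : Fin (n+2) → Fin (n+2) → ℂ)
      = (fun (m : Fin M) (l : Fin (n+2)) => v l m) ∘ (Fin.snoc (Fin.snoc p i) j) := by
    rw [Fin.comp_snoc, Fin.comp_snoc]
  rw [h]
  rfl

lemma qpt_cases (p : Fin n → Fin M) (hp : ∀ k, (p k : ℕ) = (k : ℕ)) (i j : Fin M)
    (l : Fin (n+2)) :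
    ((qpt p i j l : ℕ) = (l : ℕ) ∧ (l : ℕ) < n)
    ∨ ((l : ℕ) = n ∧ (qpt p i j l : ℕ) = (i : ℕ))
    ∨ ((l : ℕ) = n + 1 ∧ (qpt p i j l : ℕ) = (j : ℕ)) := by
  unfold qpt
  induction l using Fin.lastCases with
  | last => right; right; simp
  | cast l =>
    induction l using Fin.lastCases with
    | last => right; left; simp
    | cast l =>
      left
      simp only [Fin.snoc_castSucc, Fin.coe_castSucc]
      exact ⟨hp l, l.isLt⟩

lemma qpt_inj (p : Fin n → Fin M) (hp : ∀ k, (p k : ℕ) = (k : ℕ)) (i j : Fin M)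
    (hi : n ≤ (i : ℕ)) (hij : (i : ℕ) < (j : ℕ)) :
    Function.Injective (qpt p i j) := by
  intro k l hkl
  have hv := congrArg Fin.val hkl
  rcases qpt_cases p hp i j k with ⟨hk1, hk2⟩ | ⟨hk1, hk2⟩ | ⟨hk1, hk2⟩ <;>
    rcases qpt_cases p hp i j l with ⟨hl1, hl2⟩ | ⟨hl1, hl2⟩ | ⟨hl1, hl2⟩ <;>
    (apply Fin.ext; omega)

lemma qpt_ne (p : Fin n → Fin M) (hp : ∀ k, (p k : ℕ) = (k : ℕ)) (i j m : Fin M)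
    (h1 : n ≤ (m : ℕ)) (h2 : (m : ℕ) ≠ (i : ℕ)) (h3 : (m : ℕ) ≠ (j : ℕ)) :
    ∀ l, qpt p i j l ≠ m := by
  intro l hl
  have hv := congrArg Fin.val hl
  rcases qpt_cases p hp i j l with ⟨hl1, hl2⟩ | ⟨hl1, hl2⟩ | ⟨hl1, hl2⟩ <;> omega

@[simp] lemma qpt_at_i (p : Fin n → Fin M) (i j : Fin M) :
    qpt p i j ((Fin.last n).castSucc) = i := by
  simp [qpt]

@[simp] lemma qpt_at_j (p : Fin n → Fin M) (i j : Fin M) :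
    qpt p i j (Fin.last (n+1)) = j := by
  simp [qpt]

end QLemmas

set_option maxHeartbeats 1000000 in
/-- For `N ≥ 2` and `M ≥ N + 2`, there is a subspace `L ⊆ ⋀^N ℂ^M` of codimension 3
which is not spanned by the decomposable vectors it contains. -/
theorem exists_codim_three_not_spanned_by_slaters (N M : ℕ) (hN : 2 ≤ N)
    (hM : N + 2 ≤ M) :
    ∃ L : Submodule ℂ (TensorPow N M),
      L ≤ exteriorPow N M ∧
      Module.finrank ℂ L + 3 = Module.finrank ℂ (exteriorPow N M) ∧
      Submodule.span ℂ {ψ : TensorPow N M | ψ ∈ L ∧ IsSlater ψ} ≠ L := by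
  obtain ⟨n, rfl⟩ : ∃ n, N = n + 2 := ⟨N - 2, by omega⟩
  have h4 : n + 4 ≤ M := by omega
  -- the distinguished indices
  obtain ⟨p, hpdef⟩ : ∃ p' : Fin n → Fin M,
      p' = fun k => Fin.castLE (by omega : n ≤ M) k := ⟨_, rfl⟩
  have hp : ∀ k, (p k : ℕ) = (k : ℕ) := by rw [hpdef]; intro k; simp
  obtain ⟨ia, hia⟩ : ∃ x : Fin M, x = ⟨n, by omega⟩ := ⟨_, rfl⟩
  obtain ⟨ib, hib⟩ : ∃ x : Fin M, x = ⟨n+1, by omega⟩ := ⟨_, rfl⟩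
  obtain ⟨ic, hic⟩ : ∃ x : Fin M, x = ⟨n+2, by omega⟩ := ⟨_, rfl⟩
  obtain ⟨id', hid⟩ : ∃ x : Fin M, x = ⟨n+3, by omega⟩ := ⟨_, rfl⟩
  have via' : (ia : ℕ) = n := by rw [hia]
  have vib : (ib : ℕ) = n + 1 := by rw [hib]
  have vic : (ic : ℕ) = n + 2 := by rw [hic]
  have vid : (id' : ℕ) = n + 3 := by rw [hid]
  clear hia hib hic hid hpdef
  -- the three linear functionals
  obtain ⟨φ, hφ⟩ : ∃ φ' : TensorPow (n+2) M →ₗ[ℂ] (Fin 3 → ℂ),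
      φ' = LinearMap.pi
        ![evL (qpt p ia ib), evL (qpt p ia ic), evL (qpt p ia id') + evL (qpt p ib ic)] :=
    ⟨_, rfl⟩
  have hφ0 : ∀ ψ : TensorPow (n+2) M, φ ψ 0 = ψ (qpt p ia ib) := by
    intro ψ; rw [hφ]; rfl
  have hφ1 : ∀ ψ : TensorPow (n+2) M, φ ψ 1 = ψ (qpt p ia ic) := by
    intro ψ; rw [hφ]; rfl
  have hφ2 : ∀ ψ : TensorPow (n+2) M, φ ψ 2 = ψ (qpt p ia id') + ψ (qpt p ib ic) := by
    intro ψ; rw [hφ]; rfl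
  -- zero / one evaluations
  have Hself : ∀ (i j : Fin M), n ≤ (i : ℕ) → (i : ℕ) < (j : ℕ) →
      wedge (fun k => bv (qpt p i j k)) (qpt p i j) = 1 :=
    fun i j h1 h2 => wedge_bv_self (qpt_inj p hp i j h1 h2)
  have Hz1 : ∀ (i j i' j' : Fin M), n ≤ (i' : ℕ) → (i' : ℕ) ≠ (i : ℕ) → (i' : ℕ) ≠ (j : ℕ) →
      wedge (fun k => bv (qpt p i j k)) (qpt p i' j') = 0 := by
    intro i j i' j' h1 h2 h3
    apply wedge_bv_zero _ _ ((Fin.last n).castSucc)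
    rw [qpt_at_i]
    exact qpt_ne p hp i j i' h1 h2 h3
  have Hz2 : ∀ (i j i' j' : Fin M), n ≤ (j' : ℕ) → (j' : ℕ) ≠ (i : ℕ) → (j' : ℕ) ≠ (j : ℕ) →
      wedge (fun k => bv (qpt p i j k)) (qpt p i' j') = 0 := by
    intro i j i' j' h1 h2 h3
    apply wedge_bv_zero _ _ (Fin.last (n+1))
    rw [qpt_at_j]
    exact qpt_ne p hp i j j' h1 h2 h3
  -- values of φ on the four basis Slater determinants
  have hφab : φ (wedge (fun k => bv (qpt p ia ib k))) = ![1, 0, 0] := by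
    funext t
    fin_cases t
    · rw [show ((⟨0, by omega⟩ : Fin 3) = 0) from rfl, hφ0,
        Hself ia ib (by omega) (by omega)]; rfl
    · rw [show ((⟨1, by omega⟩ : Fin 3) = 1) from rfl, hφ1,
        Hz2 ia ib ia ic (by omega) (by omega) (by omega)]; rfl
    · rw [show ((⟨2, by omega⟩ : Fin 3) = 2) from rfl, hφ2,
        Hz2 ia ib ia id' (by omega) (by omega) (by omega),
        Hz2 ia ib ib ic (by omega) (by omega) (by omega), add_zero]; rfl
  have hφac : φ (wedge (fun k => bv (qpt p ia ic k))) = ![0, 1, 0] := by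
    funext t
    fin_cases t
    · rw [show ((⟨0, by omega⟩ : Fin 3) = 0) from rfl, hφ0,
        Hz2 ia ic ia ib (by omega) (by omega) (by omega)]; rfl
    · rw [show ((⟨1, by omega⟩ : Fin 3) = 1) from rfl, hφ1,
        Hself ia ic (by omega) (by omega)]; rfl
    · rw [show ((⟨2, by omega⟩ : Fin 3) = 2) from rfl, hφ2,
        Hz2 ia ic ia id' (by omega) (by omega) (by omega),
        Hz1 ia ic ib ic (by omega) (by omega) (by omega), add_zero]; rfl
  have hφad : φ (wedge (fun k => bv (qpt p ia id' k))) = ![0, 0, 1] := by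
    funext t
    fin_cases t
    · rw [show ((⟨0, by omega⟩ : Fin 3) = 0) from rfl, hφ0,
        Hz2 ia id' ia ib (by omega) (by omega) (by omega)]; rfl
    · rw [show ((⟨1, by omega⟩ : Fin 3) = 1) from rfl, hφ1,
        Hz2 ia id' ia ic (by omega) (by omega) (by omega)]; rfl
    · rw [show ((⟨2, by omega⟩ : Fin 3) = 2) from rfl, hφ2,
        Hself ia id' (by omega) (by omega),
        Hz1 ia id' ib ic (by omega) (by omega) (by omega), add_zero]; rfl
  have hφbc : φ (wedge (fun k => bv (qpt p ib ic k))) = ![0, 0, 1] := by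
    funext t
    fin_cases t
    · rw [show ((⟨0, by omega⟩ : Fin 3) = 0) from rfl, hφ0,
        Hz1 ib ic ia ib (by omega) (by omega) (by omega)]; rfl
    · rw [show ((⟨1, by omega⟩ : Fin 3) = 1) from rfl, hφ1,
        Hz1 ib ic ia ic (by omega) (by omega) (by omega)]; rfl
    · rw [show ((⟨2, by omega⟩ : Fin 3) = 2) from rfl, hφ2,
        Hz1 ib ic ia id' (by omega) (by omega) (by omega),
        Hself ib ic (by omega) (by omega), zero_add]; rfl
  refine ⟨exteriorPow (n+2) M ⊓ LinearMap.ker φ, inf_le_left, ?_, ?_⟩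
  · -- codimension 3
    have hrange : LinearMap.range (φ.domRestrict (exteriorPow (n+2) M)) = ⊤ := by
      rw [LinearMap.range_eq_top]
      intro wv
      refine ⟨⟨wv 0 • wedge (fun k => bv (qpt p ia ib k))
          + wv 1 • wedge (fun k => bv (qpt p ia ic k))
          + wv 2 • wedge (fun k => bv (qpt p ia id' k)),
        add_mem (add_mem (Submodule.smul_mem _ _ (wedge_mem_exteriorPow _))
          (Submodule.smul_mem _ _ (wedge_mem_exteriorPow _)))
          (Submodule.smul_mem _ _ (wedge_mem_exteriorPow _))⟩, ?_⟩
      show φ (_ + _ + _) = wv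
      rw [map_add, map_add, map_smul, map_smul, map_smul, hφab, hφac, hφad]
      funext t
      fin_cases t <;> simp
    have hfr := LinearMap.finrank_range_add_finrank_ker (φ.domRestrict (exteriorPow (n+2) M))
    rw [hrange, finrank_top, Module.finrank_fin_fun] at hfr
    have hmap : (LinearMap.ker (φ.domRestrict (exteriorPow (n+2) M))).map
        (exteriorPow (n+2) M).subtype = exteriorPow (n+2) M ⊓ LinearMap.ker φ := by
      rw [LinearMap.ker_domRestrict, Submodule.map_comap_subtype]
    have hfin : Module.finrank ℂ (exteriorPow (n+2) M ⊓ LinearMap.ker φ : Submodule ℂ _)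
        = Module.finrank ℂ (LinearMap.ker (φ.domRestrict (exteriorPow (n+2) M))) := by
      rw [← hmap, Submodule.finrank_map_subtype_eq]
    rw [hfin]
    omega
  · -- not spanned by its Slater vectors
    intro heq
    have hsub : Submodule.span ℂ {ψ : TensorPow (n+2) M |
          ψ ∈ exteriorPow (n+2) M ⊓ LinearMap.ker φ ∧ IsSlater ψ}
        ≤ LinearMap.ker (evL (qpt p ia id')) := by
      rw [Submodule.span_le]
      rintro ψ ⟨hψL, v, rfl⟩
      have hker : φ (wedge v) = 0 := by
        have h5 := (Submodule.mem_inf.mp hψL).2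
        rwa [LinearMap.mem_ker] at h5
      have e1 : wedge v (qpt p ia ib) = 0 := by
        have := congrFun hker 0
        rw [hφ0] at this
        exact this
      have e2 : wedge v (qpt p ia ic) = 0 := by
        have := congrFun hker 1
        rw [hφ1] at this
        exact this
      have e3 : wedge v (qpt p ia id') + wedge v (qpt p ib ic) = 0 := by
        have := congrFun hker 2
        rw [hφ2] at this
        exact this
      have hpl := PluckerAux.plucker ((fun (m : Fin M) (l : Fin (n+2)) => v l m) ∘ p)
        (fun l => v l ia) (fun l => v l ib) (fun l => v l ic) (fun l => v l id')
      rw [← wedge_qpt v p ia ib, ← wedge_qpt v p ic id', ← wedge_qpt v p ia ic,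
        ← wedge_qpt v p ib id', ← wedge_qpt v p ia id', ← wedge_qpt v p ib ic] at hpl
      have e4 : wedge v (qpt p ib ic) = - wedge v (qpt p ia id') := by
        linear_combination e3
      rw [e1, e2, e4] at hpl
      have h2 : wedge v (qpt p ia id') * wedge v (qpt p ia id') = 0 := by
        linear_combination - hpl
      rw [SetLike.mem_coe, LinearMap.mem_ker, evL_apply]
      exact mul_self_eq_zero.mp h2
    have hmem : wedge (fun k => bv (qpt p ia id' k)) - wedge (fun k => bv (qpt p ib ic k))
        ∈ exteriorPow (n+2) M ⊓ LinearMap.ker φ := by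
      constructor
      · exact sub_mem (wedge_mem_exteriorPow _) (wedge_mem_exteriorPow _)
      · rw [SetLike.mem_coe, LinearMap.mem_ker, map_sub, hφad, hφbc, sub_self]
    rw [← heq] at hmem
    have h0 := hsub hmem
    rw [LinearMap.mem_ker, evL_apply] at h0
    have hval : (wedge (fun k => bv (qpt p ia id' k))
        - wedge (fun k => bv (qpt p ib ic k)) : TensorPow (n+2) M) (qpt p ia id') = 1 := by
      have hv1 : wedge (fun k => bv (qpt p ia id' k)) (qpt p ia id') = 1 :=
        Hself ia id' (by omega) (by omega)
      have hv2 : wedge (fun k => bv (qpt p ib ic k)) (qpt p ia id') = 0 :=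
        Hz1 ib ic ia id' (by omega) (by omega) (by omega)
      show wedge (fun k => bv (qpt p ia id' k)) (qpt p ia id')
        - wedge (fun k => bv (qpt p ib ic k)) (qpt p ia id') = 1
      rw [hv1, hv2, sub_zero]
    rw [h0] at hval
    exact zero_ne_one hval
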